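/- arXiv:1912.11483 — 2 statements merged into one kernel-verified Lean document; each statement's English description precedes it below -/
import Mathlib

section
/- Let F(x) := ∫₀ˣ (1−t⁶)^{−1/2} dt and H(x) := ∫₀ˣ (1−t²)^{−5/6} dt. For every W ∈ [0,1], H( √(1−W⁶) ) = 3 · ( F(1) − F(W) ). (This is the identity sin_{6/5,2}(2x) = √(1 − sin_{2,6}⁶(π_{2,6}/2 − 2x/3)).) -/
open Real MeasureTheory intervalIntegral Set Filter

/-- `F = F_{2,6}`, the incomplete integral `∫₀ˣ (1−t⁶)^{−1/2} dt`. -/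
noncomputable def F26 (x : ℝ) : ℝ := ∫ t in (0:ℝ)..x, (1 - t ^ 6) ^ (-(1/2) : ℝ)

/-- `H = F_{6/5,2}`, the incomplete integral `∫₀ˣ (1−t²)^{−5/6} dt`. -/
noncomputable def H652 (x : ℝ) : ℝ := ∫ t in (0:ℝ)..x, (1 - t ^ 2) ^ (-(5/6) : ℝ)

lemma meas_aux (n : ℕ) (r : ℝ) : Measurable (fun t : ℝ => (1 - t ^ n) ^ r) := by
  fun_prop

lemma integrable_aux (n : ℕ) (hn : 1 ≤ n) (r : ℝ) (hr : -1 < r) (hr0 : r ≤ 0) :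
    IntervalIntegrable (fun t : ℝ => (1 - t ^ n) ^ r) volume 0 1 := by
  have hg : IntervalIntegrable (fun t : ℝ => (1 - t) ^ r) volume 0 1 := by
    have := (intervalIntegrable_rpow' (a := 0) (b := 1) hr).comp_sub_left 1
    simpa using this.symm
  refine hg.mono_fun ((meas_aux n r).aestronglyMeasurable) ?_
  refine (ae_restrict_iff' measurableSet_uIoc).2 (Filter.Eventually.of_forall fun t ht => ?_)
  rw [uIoc_of_le (by norm_num : (0:ℝ) ≤ 1)] at ht
  obtain ⟨ht0, ht1⟩ := ht
  have htn : t ^ n ≤ t := pow_le_of_le_one ht0.le ht1 (Nat.one_le_iff_ne_zero.mp hn)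
  have h1 : (0:ℝ) ≤ 1 - t := by linarith
  have h2 : 1 - t ≤ 1 - t ^ n := by linarith
  show |(1 - t ^ n) ^ r| ≤ |(1 - t) ^ r|
  rw [abs_of_nonneg (Real.rpow_nonneg (by linarith) r),
    abs_of_nonneg (Real.rpow_nonneg h1 r)]
  rcases eq_or_lt_of_le ht1 with h | h
  · subst h; simp [one_pow]
  · exact Real.rpow_le_rpow_of_nonpos (by linarith) h2 hr0

lemma cont_aux (n : ℕ) (r : ℝ) {x : ℝ} (hx : x ^ n < 1) :
    ContinuousAt (fun t : ℝ => (1 - t ^ n) ^ r) x := by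
  have : (1 : ℝ) - x ^ n ≠ 0 := (by linarith : (0:ℝ) < 1 - x ^ n).ne'
  exact (continuous_const.sub (continuous_pow n)).continuousAt.rpow_const (Or.inl this)

lemma smaf_aux (n : ℕ) (r : ℝ) (x : ℝ) :
    StronglyMeasurableAtFilter (fun t : ℝ => (1 - t ^ n) ^ r) (nhds x) :=
  ⟨Set.univ, Filter.univ_mem, ((meas_aux n r).stronglyMeasurable).aestronglyMeasurable⟩

lemma hasDerivAt_aux (n : ℕ) (hn : 1 ≤ n) (r : ℝ) (hr : -1 < r) (hr0 : r ≤ 0)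
    {x : ℝ} (hx : x ∈ Set.Icc (0:ℝ) 1) (hx1 : x ^ n < 1) :
    HasDerivAt (fun u => ∫ t in (0:ℝ)..u, (1 - t ^ n) ^ r) ((1 - x ^ n) ^ r) x := by
  refine intervalIntegral.integral_hasDerivAt_right ?_ (smaf_aux n r x) (cont_aux n r hx1)
  exact (integrable_aux n hn r hr hr0).mono_set
    (by rw [Set.uIcc_of_le hx.1, Set.uIcc_of_le (by norm_num : (0:ℝ) ≤ 1)]
        exact Set.Icc_subset_Icc le_rfl hx.2)

lemma D_deriv {W : ℝ} (hW : W ∈ Set.Ioo (0:ℝ) 1) :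
    HasDerivAt (fun w => H652 (Real.sqrt (1 - w ^ 6)) - 3 * (F26 1 - F26 w)) 0 W := by
  obtain ⟨hW0, hW1⟩ := hW
  have hW6 : W ^ 6 < 1 := pow_lt_one₀ hW0.le hW1 (by norm_num)
  have hW6' : 0 < W ^ 6 := by positivity
  set s := Real.sqrt (1 - W ^ 6) with hs_def
  have hpos : (0:ℝ) < 1 - W ^ 6 := by linarith
  have hs0 : 0 < s := Real.sqrt_pos.2 hpos
  have hssq : s ^ 2 = 1 - W ^ 6 := Real.sq_sqrt hpos.le
  have hs1 : s < 1 := by nlinarith [hssq, hs0, hW6']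
  -- derivative of H652 at s
  have h1 : HasDerivAt H652 ((1 - s ^ 2) ^ (-(5/6) : ℝ)) s := by
    have := hasDerivAt_aux 2 (by norm_num) (-(5/6)) (by norm_num) (by norm_num)
      ⟨hs0.le, hs1.le⟩ (by rw [hssq]; linarith)
    exact this
  -- derivative of w ↦ √(1 - w^6)
  have hinner : HasDerivAt (fun w : ℝ => 1 - w ^ 6) (-(6 * W ^ 5)) W := by
    have := (hasDerivAt_pow 6 W).const_sub 1
    simpa using this
  have h2 : HasDerivAt (fun w : ℝ => Real.sqrt (1 - w ^ 6))
      (1 / (2 * s) * (-(6 * W ^ 5))) W :=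
    (Real.hasDerivAt_sqrt (by positivity : (1:ℝ) - W ^ 6 ≠ 0)).comp W hinner
  have h3 : HasDerivAt (fun w : ℝ => H652 (Real.sqrt (1 - w ^ 6)))
      ((1 - s ^ 2) ^ (-(5/6) : ℝ) * (1 / (2 * s) * (-(6 * W ^ 5)))) W := by exact h1.comp W h2
  have h4 : HasDerivAt F26 ((1 - W ^ 6) ^ (-(1/2) : ℝ)) W :=
    hasDerivAt_aux 6 (by norm_num) (-(1/2)) (by norm_num) (by norm_num) ⟨hW0.le, hW1.le⟩ hW6
  have h5 : HasDerivAt (fun w => 3 * (F26 1 - F26 w))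
      (3 * (0 - (1 - W ^ 6) ^ (-(1/2) : ℝ))) W :=
    ((hasDerivAt_const W (F26 1)).sub h4).const_mul 3
  have h6 := h3.sub h5
  convert h6 using 1
  · rfl
  · rfl
  · rfl
  -- now arithmetic
  have e1 : (1 - s ^ 2) = W ^ 6 := by rw [hssq]; ring
  have e2 : ((W : ℝ) ^ 6) ^ (-(5/6) : ℝ) = (W ^ 5)⁻¹ := by
    rw [← Real.rpow_natCast W 6, ← Real.rpow_mul hW0.le]
    norm_num [Real.rpow_neg hW0.le]
  have e3 : ((1:ℝ) - W ^ 6) ^ (-(1/2) : ℝ) = s⁻¹ := by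
    rw [Real.rpow_neg hpos.le, hs_def, Real.rpow_def_of_pos hpos, Real.sqrt_eq_rpow,
      Real.rpow_def_of_pos hpos]
  rw [e1, e2, e3]
  have hW5 : (W:ℝ) ^ 5 ≠ 0 := by positivity
  field_simp
  ring

lemma cont_D : ContinuousOn
    (fun w => H652 (Real.sqrt (1 - w ^ 6)) - 3 * (F26 1 - F26 w)) (Set.Icc (0:ℝ) 1) := by
  have contF : ContinuousOn F26 (Set.Icc (0:ℝ) 1) := by
    have := intervalIntegral.continuousOn_primitive_interval'
      (integrable_aux 6 (by norm_num) (-(1/2)) (by norm_num) (by norm_num))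
      (Set.left_mem_uIcc (a := (0:ℝ)) (b := 1))
    rwa [Set.uIcc_of_le (by norm_num : (0:ℝ) ≤ 1)] at this
  have contH : ContinuousOn H652 (Set.Icc (0:ℝ) 1) := by
    have := intervalIntegral.continuousOn_primitive_interval'
      (integrable_aux 2 (by norm_num) (-(5/6)) (by norm_num) (by norm_num))
      (Set.left_mem_uIcc (a := (0:ℝ)) (b := 1))
    rwa [Set.uIcc_of_le (by norm_num : (0:ℝ) ≤ 1)] at this
  have contg : ContinuousOn (fun w : ℝ => Real.sqrt (1 - w ^ 6)) (Set.Icc (0:ℝ) 1) :=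
    (Real.continuous_sqrt.comp (continuous_const.sub (continuous_pow 6))).continuousOn
  have hmaps : Set.MapsTo (fun w : ℝ => Real.sqrt (1 - w ^ 6))
      (Set.Icc (0:ℝ) 1) (Set.Icc (0:ℝ) 1) := by
    intro w hw
    obtain ⟨h0, h1⟩ := hw
    have hw6 : w ^ 6 ≤ 1 := pow_le_one₀ h0 h1
    exact ⟨Real.sqrt_nonneg _, Real.sqrt_le_one.2 (by nlinarith [pow_nonneg h0 6])⟩
  exact (contH.comp contg hmaps).sub (continuousOn_const.mul (continuousOn_const.sub contF))

/-- The identity `sin_{6/5,2}(2x) = √(1 − sin_{2,6}⁶(π_{2,6}/2 − 2x/3))`,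
expressed via the integrals. -/
theorem f_via_complement (W : ℝ) (hW : W ∈ Set.Icc (0:ℝ) 1) :
    H652 (Real.sqrt (1 - W ^ 6)) = 3 * (F26 1 - F26 W) := by
  set D := fun w => H652 (Real.sqrt (1 - w ^ 6)) - 3 * (F26 1 - F26 w) with hD
  have hD1 : D 1 = 0 := by
    simp only [hD]
    norm_num [H652, intervalIntegral.integral_same]
  have hconst : ∀ a ∈ Set.Ioo (0:ℝ) 1, ∀ b ∈ Set.Ioo (0:ℝ) 1, a ≤ b → D b = D a := by
    intro a ha b hb hab
    have := constant_of_has_deriv_right_zero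
      (f := D) (a := a) (b := b)
      (cont_D.mono (Set.Icc_subset_Icc ha.1.le hb.2.le))
      (fun x hx => (D_deriv ⟨lt_of_lt_of_le ha.1 hx.1, hx.2.trans hb.2⟩).hasDerivWithinAt)
    exact this b ⟨hab, le_rfl⟩
  have hk : ∀ a ∈ Set.Ioo (0:ℝ) 1, D a = D (1/2 : ℝ) := by
    intro a ha
    rcases le_total a (1/2 : ℝ) with h | h
    · exact (hconst a ha (1/2) (by norm_num) h).symm
    · exact hconst (1/2) (by norm_num) a ha h
  -- D is constant (= D (1/2)) on Ioo; extend to 1 by continuity ⇒ D (1/2) = 0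
  have hne : (nhdsWithin (1:ℝ) (Set.Ioo (0:ℝ) 1)).NeBot := right_nhdsWithin_Ioo_neBot (by norm_num)
  have hlim1 : Filter.Tendsto D (nhdsWithin (1:ℝ) (Set.Ioo (0:ℝ) 1)) (nhds (D 1)) :=
    ((cont_D 1 (by norm_num)).mono (Set.Ioo_subset_Icc_self)).tendsto
  have hlim2 : Filter.Tendsto D (nhdsWithin (1:ℝ) (Set.Ioo (0:ℝ) 1)) (nhds (D (1/2))) := by
    refine Filter.Tendsto.congr' ?_ tendsto_const_nhds
    filter_upwards [self_mem_nhdsWithin] with x hx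
    exact (hk x hx).symm
  have hmid : D (1/2 : ℝ) = 0 := by
    have := tendsto_nhds_unique hlim2 hlim1
    rw [this, hD1]
  -- value at 0 by continuity from the right
  have hD0 : D 0 = 0 := by
    have hne0 : (nhdsWithin (0:ℝ) (Set.Ioo (0:ℝ) 1)).NeBot :=
      left_nhdsWithin_Ioo_neBot (by norm_num)
    have hl1 : Filter.Tendsto D (nhdsWithin (0:ℝ) (Set.Ioo (0:ℝ) 1)) (nhds (D 0)) :=
      ((cont_D 0 (by norm_num)).mono (Set.Ioo_subset_Icc_self)).tendsto
    have hl2 : Filter.Tendsto D (nhdsWithin (0:ℝ) (Set.Ioo (0:ℝ) 1)) (nhds 0) := by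
      refine Filter.Tendsto.congr' ?_ tendsto_const_nhds
      filter_upwards [self_mem_nhdsWithin] with x hx
      rw [hk x hx, hmid]
    exact tendsto_nhds_unique hl1 hl2
  have : D W = 0 := by
    rcases eq_or_lt_of_le hW.1 with h0 | h0
    · rw [← h0]; exact hD0
    rcases eq_or_lt_of_le hW.2 with h1 | h1
    · rw [h1]; exact hD1
    · rw [hk W ⟨h0, h1⟩, hmid]
  have := sub_eq_zero.mp this
  simpa [hD] using this
end

section
/- Let 1 < q < ∞ and q* := q/(q−1). Then 2 · ∫₀¹ (1−t^q)^{−1/2} dt = 2^{2/q} · ∫₀¹ (1−t^q)^{−(q−1)/q} dt. (Equivalently, π_{2,q} = 2^{2/q} F_{q*,q}(1) = 2^{2/q} π_{q*,q}/2; this follows from the multiple-angle formula at s = 1.) -/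
open MeasureTheory Set intervalIntegral Real

lemma beta_integrable {u v : ℝ} (hu : 0 < u) (hv : 0 < v) :
    IntervalIntegrable (fun x => x ^ (u-1) * (1-x) ^ (v-1)) volume 0 1 := by
  have hC := Complex.betaIntegral_convergent (u := (u:ℂ)) (v := (v:ℂ)) (by simpa) (by simpa)
  have h1 : IntegrableOn (fun x : ℝ =>
      ((x:ℂ) ^ ((u:ℂ)-1) * (1-(x:ℂ)) ^ ((v:ℂ)-1)).re) (Ioc (0:ℝ) 1) volume := hC.1.re
  refine ⟨h1.congr_fun ?_ measurableSet_Ioc, by simp [IntegrableOn]⟩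
  intro x hx
  have h0 : (0:ℝ) ≤ x := hx.1.le
  have h1' : (0:ℝ) ≤ 1 - x := by linarith [hx.2]
  have e1 : ((x:ℂ)) ^ ((u:ℂ)-1) = ((x ^ (u-1) : ℝ) : ℂ) := by
    rw [Complex.ofReal_cpow h0]; push_cast; ring_nf
  have e2 : ((1:ℂ)-(x:ℂ)) ^ ((v:ℂ)-1) = (((1-x) ^ (v-1) : ℝ) : ℂ) := by
    rw [show ((1:ℂ)-(x:ℂ)) = (((1-x : ℝ)):ℂ) by push_cast; ring,
      Complex.ofReal_cpow h1']; push_cast; ring_nf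
  simp [e1, e2, ← Complex.ofReal_mul]

lemma beta_gamma {u v : ℝ} (hu : 0 < u) (hv : 0 < v) :
    Real.Gamma u * Real.Gamma v
      = Real.Gamma (u+v) * ∫ x in (0:ℝ)..1, x ^ (u-1) * (1-x) ^ (v-1) := by
  have hc := Complex.Gamma_mul_Gamma_eq_betaIntegral (s := (u:ℂ)) (t := (v:ℂ))
    (by simpa) (by simpa)
  have hbeta : Complex.betaIntegral u v
      = ((∫ x in (0:ℝ)..1, x ^ (u-1) * (1-x) ^ (v-1) : ℝ) : ℂ) := by
    rw [Complex.betaIntegral, ← intervalIntegral.integral_ofReal]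
    refine intervalIntegral.integral_congr fun x hx => ?_
    rw [uIcc_of_le zero_le_one] at hx
    have h0 : (0:ℝ) ≤ x := hx.1
    have h1' : (0:ℝ) ≤ 1 - x := by linarith [hx.2]
    rw [Complex.ofReal_mul, Complex.ofReal_cpow h0, Complex.ofReal_cpow h1']
    push_cast; ring_nf
  rw [hbeta, ← Complex.ofReal_add, Complex.Gamma_ofReal, Complex.Gamma_ofReal,
    Complex.Gamma_ofReal, ← Complex.ofReal_mul, ← Complex.ofReal_mul] at hc
  exact_mod_cast hc

lemma integrand_integrable {q a : ℝ} (hq : 1 < q) (ha0 : 0 < a) (ha1 : a < 1) :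
    IntervalIntegrable (fun t : ℝ => (1 - t ^ q) ^ (-a)) volume 0 1 := by
  have hmaj : IntervalIntegrable (fun t : ℝ => (1 - t) ^ (-a)) volume 0 1 := by
    have := (intervalIntegral.intervalIntegrable_rpow' (a := 0) (b := 1)
      (r := -a) (by linarith)).comp_sub_left 1
    simpa using this.symm
  refine hmaj.mono_fun ?_ ?_
  · -- AEStronglyMeasurable
    apply Measurable.aestronglyMeasurable
    fun_prop
  · -- norm bound ae on Ι 0 1 = Ioc 0 1
    rw [uIoc_of_le zero_le_one]
    filter_upwards [ae_restrict_mem measurableSet_Ioc] with t ht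
    have ht0 : 0 < t := ht.1
    have ht1 : t ≤ 1 := ht.2
    have htq : t ^ q ≤ t := by
      simpa using Real.rpow_le_rpow_of_exponent_ge ht0 ht1 (le_of_lt hq)
    have h1 : 0 ≤ 1 - t ^ q := by
      have : t ^ q ≤ 1 := le_trans htq ht1
      linarith
    rw [Real.norm_eq_abs, Real.norm_eq_abs, abs_of_nonneg (Real.rpow_nonneg h1 _),
      abs_of_nonneg (Real.rpow_nonneg (by linarith) _)]
    rcases eq_or_lt_of_le ht1 with rfl | hlt
    · have h1q : (1:ℝ) ^ q = 1 := Real.one_rpow q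
      rw [h1q]
    · exact Real.rpow_le_rpow_of_nonpos (by linarith) (by linarith) (by linarith)

lemma subst_lemma {q a : ℝ} (hq : 1 < q) (ha0 : 0 < a) (ha1 : a < 1) :
    q * ∫ t in (0:ℝ)..1, (1 - t ^ q) ^ (-a)
      = ∫ x in (0:ℝ)..1, x ^ (1/q - 1) * (1-x) ^ (-a) := by
  have hq0 : (0:ℝ) < q := by linarith
  set g : ℝ → ℝ := fun x => x ^ (1/q - 1) * (1-x) ^ (-a) with hg
  have hpt : ∀ x : ℝ, 0 < x → q * (1 - x ^ q) ^ (-a) = (q * x ^ (q-1)) • (g ∘ fun t => t ^ q) x := by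
    intro x hx0
    have e1 : (x^q)^(1/q-1) = x^(1-q) := by
      rw [← Real.rpow_mul hx0.le]; congr 1; field_simp
    have e2 : x^(q-1) * x^(1-q) = 1 := by
      rw [← Real.rpow_add hx0]; norm_num
    simp only [hg, Function.comp, smul_eq_mul, e1]
    linear_combination -(q * (1 - x^q)^(-a)) * e2
  have hbeta : IntervalIntegrable g volume 0 1 := by
    have := beta_integrable (u := 1/q) (v := 1-a) (by positivity) (by linarith)
    simpa [hg, show (1:ℝ)-a-1 = -a by ring] using this
  have key : (∫ x in (0:ℝ)..1, (q * x ^ (q-1)) • (g ∘ fun t => t ^ q) x)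
      = ∫ u in ((0:ℝ)^q)..((1:ℝ)^q), g u := by
    apply intervalIntegral.integral_comp_smul_deriv''' (f := fun t => t ^ q)
      (f' := fun t => q * t ^ (q-1))
    · exact fun x _ => (Real.continuousAt_rpow_const x q (Or.inr hq0.le)).continuousWithinAt
    · intro x hx
      simp only [min_eq_left zero_le_one, max_eq_right zero_le_one] at hx
      exact ((Real.hasDerivAt_rpow_const (p := q) (Or.inl hx.1.ne'))).hasDerivWithinAt
    · simp only [min_eq_left zero_le_one, max_eq_right zero_le_one]
      have him : (fun t : ℝ => t ^ q) '' Ioo (0:ℝ) 1 ⊆ Ioo 0 1 := by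
        rintro _ ⟨t, ht, rfl⟩
        exact ⟨Real.rpow_pos_of_pos ht.1 q, Real.rpow_lt_one ht.1.le ht.2 hq0⟩
      refine ContinuousOn.mono ?_ him
      apply ContinuousOn.mul
      · exact ContinuousOn.rpow_const continuousOn_id fun x hx => Or.inl hx.1.ne'
      · exact ContinuousOn.rpow_const (continuousOn_const.sub continuousOn_id)
          fun x hx => Or.inl (fun h => by have := sub_eq_zero.mp h; linarith [hx.2])
    · have him : (fun t : ℝ => t ^ q) '' (Set.uIcc (0:ℝ) 1) ⊆ Icc 0 1 := by
        rw [uIcc_of_le zero_le_one]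
        rintro _ ⟨t, ht, rfl⟩
        exact ⟨Real.rpow_nonneg ht.1 q, Real.rpow_le_one ht.1 ht.2 hq0.le⟩
      refine IntegrableOn.mono_set ?_ him
      rw [← uIcc_of_le (zero_le_one (α := ℝ)), ← intervalIntegrable_iff']
      exact hbeta
    · rw [uIcc_of_le zero_le_one]
      have hInt : IntegrableOn (fun t : ℝ => q * (1 - t ^ q) ^ (-a)) (Icc (0:ℝ) 1) volume := by
        rw [← uIcc_of_le (zero_le_one (α := ℝ)), ← intervalIntegrable_iff']
        exact (integrand_integrable hq ha0 ha1).const_mul q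
      refine hInt.congr ?_
      have hne : ∀ᵐ x : ℝ ∂(volume.restrict (Icc (0:ℝ) 1)), x ≠ 0 :=
        ae_restrict_of_ae (by simp [ae_iff])
      filter_upwards [ae_restrict_mem measurableSet_Icc, hne] with x hx hx0
      exact hpt x (lt_of_le_of_ne hx.1 (Ne.symm hx0))
  rw [Real.zero_rpow hq0.ne', Real.one_rpow] at key
  rw [← key, ← intervalIntegral.integral_const_mul]
  refine intervalIntegral.integral_congr_ae (Filter.Eventually.of_forall fun x hx => ?_)
  rw [uIoc_of_le zero_le_one] at hx
  exact hpt x hx.1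

/-- `π_{2,q} = 2^{2/q} π_{q*,q}/2` for `1 < q < ∞`, where `q* = q/(q−1)`. -/
theorem pi_two_q_eq (q : ℝ) (hq : 1 < q) :
    2 * ∫ t in (0:ℝ)..1, (1 - t ^ q) ^ (-(1/2) : ℝ)
      = 2 ^ ((2:ℝ)/q) * ∫ t in (0:ℝ)..1, (1 - t ^ q) ^ (-((q - 1)/q)) := by
  have hq0 : (0:ℝ) < q := by linarith
  have h1q0 : (0:ℝ) < 1/q := by positivity
  have S1 := subst_lemma hq (a := 1/2) (by norm_num) (by norm_num)
  have S2 := subst_lemma hq (a := (q-1)/q) (div_pos (by linarith) hq0)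
    ((div_lt_one hq0).mpr (by linarith))
  have hB1 := beta_gamma (u := 1/q) (v := 1/2) h1q0 (by norm_num)
  have hB2 := beta_gamma (u := 1/q) (v := 1/q) h1q0 h1q0
  have hexp1 : (1:ℝ)/2 - 1 = -(1/2) := by norm_num
  have hexp2 : -((q-1)/q) = 1/q - 1 := by field_simp; ring
  simp only [hexp1] at hB1
  simp only [hexp2] at S2 ⊢
  set Ga := Real.Gamma (1/q) with hGadef
  set Gb := Real.Gamma (1/q + 1/2) with hGbdef
  set Gc := Real.Gamma (1/q + 1/q) with hGcdef
  have hGa : 0 < Ga := Real.Gamma_pos_of_pos h1q0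
  have hGb : 0 < Gb := Real.Gamma_pos_of_pos (by positivity)
  have hGc : 0 < Gc := Real.Gamma_pos_of_pos (by positivity)
  rw [Real.Gamma_one_half_eq] at hB1
  have hdup := Real.Gamma_mul_Gamma_add_half (1/q)
  rw [show 2 * ((1:ℝ)/q) = 1/q + 1/q by ring] at hdup
  rw [← hGadef, ← hGbdef, ← hGcdef] at hdup
  have e4 : (2:ℝ) ^ ((2:ℝ)/q) * 2 ^ (1 - ((1:ℝ)/q + 1/q)) = 2 := by
    rw [← Real.rpow_add two_pos, show (2:ℝ)/q + (1-((1:ℝ)/q + 1/q)) = 1 by ring, Real.rpow_one]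
  set B1 := ∫ x in (0:ℝ)..1, x ^ (1/q - 1) * (1-x) ^ (-(1/2):ℝ) with hB1def
  set B2 := ∫ x in (0:ℝ)..1, x ^ (1/q - 1) * (1-x) ^ (1/q - 1) with hB2def
  -- goal : 2 * I1 = 2^(2/q) * I2 with q*I1 = B1, q*I2 = B2
  have hq' : q ≠ 0 := hq0.ne'
  apply mul_left_cancel₀ hq'
  rw [show q * (2 * ∫ t in (0:ℝ)..1, (1 - t ^ q) ^ (-(1/2):ℝ))
      = 2 * (q * ∫ t in (0:ℝ)..1, (1 - t ^ q) ^ (-(1/2):ℝ)) by ring,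
    show q * (2 ^ ((2:ℝ)/q) * ∫ t in (0:ℝ)..1, (1 - t ^ q) ^ ((1:ℝ)/q - 1))
      = 2 ^ ((2:ℝ)/q) * (q * ∫ t in (0:ℝ)..1, (1 - t ^ q) ^ ((1:ℝ)/q - 1)) by ring,
    S1, S2]
  -- now goal : 2 * B1 = 2^(2/q) * B2
  have hb1 : B1 = Ga * √π / Gb := by
    rw [eq_div_iff hGb.ne']; linear_combination -hB1
  have hb2 : B2 = Ga * Ga / Gc := by
    rw [eq_div_iff hGc.ne']; linear_combination -hB2
  rw [hb1, hb2]
  field_simp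
  linear_combination (-(2^((2:ℝ)/q)))*hdup - (Gc*√π)*e4
end
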